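/- Fix ħ ≠ 0. There exists a unique formal power series Φ(w) = Σ_{k≥0} c_k w^k in ℚ(ħ)[[w]] with c_0 = 1 such that the formal Laurent series Φ(1/z) satisfies the quantum Bessel curve equation Φ'' + (2/ħ)·Φ' + (1/(4z²))·Φ = 0; moreover its coefficients are given explicitly by c_k = ħ^k · (∏_{i=1}^{k} (2i−1)²) / (8^k · k!). Equivalently, the coefficients satisfy c_0 = 1 and the recursion c_{k+1} = ħ·(2k+1)²/(8(k+1)) · c_k. -/

import Mathlib

/-- Coefficientwise form of the quantum Bessel curve equation
`Φ'' + (2/ħ)·Φ' + (1/(4z²))·Φ = 0` for the formal Laurent series `Φ(1/z) = Σ_k c_k z^{−k}`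
with term-by-term differentiation in `z`: comparing the coefficients of `z^{−(k+2)}` gives,
for every `k`, `k(k+1)·c_k + (2/ħ)·(−(k+1))·c_{k+1} + (1/4)·c_k = 0`. -/
def QBesselODE {F : Type*} [Field F] (hbar : F) (c : ℕ → F) : Prop :=
  ∀ k : ℕ, (k : F) * ((k : F) + 1) * c k + (2 / hbar) * (-((k : F) + 1)) * c (k + 1)
    + (1 / 4) * c k = 0

/-- The explicit coefficients `c_k = ħ^k·(∏_{i=1}^k (2i−1)²)/(8^k·k!)`. -/
noncomputable def besselCoeff {F : Type*} [Field F] (hbar : F) (k : ℕ) : F :=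
  hbar ^ k * (∏ i ∈ Finset.range k, (2 * (i : F) + 1) ^ 2) / (8 ^ k * (Nat.factorial k : F))

section Aux
variable {F : Type*} [Field F] [CharZero F] (hbar : F)

lemma qbessel_iff_rec (hhbar : hbar ≠ 0) (c : ℕ → F) :
    QBesselODE hbar c ↔ ∀ k : ℕ,
      c (k + 1) = hbar * (2 * (k : F) + 1) ^ 2 / (8 * ((k : F) + 1)) * c k := by
  have hk1 : ∀ k : ℕ, ((k : F) + 1) ≠ 0 := fun k => Nat.cast_add_one_ne_zero k
  have h8 : ∀ k : ℕ, (8 : F) * ((k : F) + 1) ≠ 0 := fun k =>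
    mul_ne_zero (by norm_num) (hk1 k)
  have main : ∀ k : ℕ, (8 * ((k : F) + 1) * c (k + 1) = hbar * (2 * (k : F) + 1) ^ 2 * c k)
      ↔ c (k + 1) = hbar * (2 * (k : F) + 1) ^ 2 / (8 * ((k : F) + 1)) * c k := by
    intro k
    rw [div_mul_eq_mul_div, eq_div_iff (h8 k)]
    constructor <;> intro hh <;> linear_combination hh
  constructor
  · intro h k
    rw [← main k]
    have := h k
    field_simp [hhbar] at this
    linear_combination -this
  · intro h k
    have key := (main k).mpr (h k)
    field_simp [hhbar]
    linear_combination -key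
end Aux

lemma bessel0' {F : Type*} [Field F] (hbar : F) : besselCoeff hbar 0 = 1 := by
  simp [besselCoeff]

lemma besselRec' {F : Type*} [Field F] [CharZero F] (hbar : F) (k : ℕ) :
    besselCoeff hbar (k + 1)
      = hbar * (2 * (k : F) + 1) ^ 2 / (8 * ((k : F) + 1)) * besselCoeff hbar k := by
  have hk1 : ((k : F) + 1) ≠ 0 := Nat.cast_add_one_ne_zero k
  have hfac : (Nat.factorial k : F) ≠ 0 := Nat.cast_ne_zero.mpr (Nat.factorial_ne_zero k)
  simp only [besselCoeff, Finset.prod_range_succ, pow_succ, Nat.factorial_succ,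
    Nat.cast_mul, Nat.cast_add, Nat.cast_one]
  field_simp

/-- There is a unique formal power series `Φ(w) = Σ c_k w^k`, `c_0 = 1`, such that `Φ(1/z)`
satisfies the quantum Bessel curve equation; its coefficients are the explicit `besselCoeff`,
and the equation is equivalent to the recursion `c_{k+1} = ħ(2k+1)²/(8(k+1))·c_k`. -/
theorem stmt10 (F : Type*) [Field F] [CharZero F] (hbar : F) (hhbar : hbar ≠ 0) :
    (∃! c : ℕ → F, c 0 = 1 ∧ QBesselODE hbar c) ∧
    (∀ c : ℕ → F, c 0 = 1 ∧ QBesselODE hbar c → ∀ k : ℕ, c k = besselCoeff hbar k) ∧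
    (∀ c : ℕ → F, (c 0 = 1 ∧ QBesselODE hbar c) ↔
      (c 0 = 1 ∧ ∀ k : ℕ,
        c (k + 1) = hbar * (2 * (k : F) + 1) ^ 2 / (8 * ((k : F) + 1)) * c k)) := by
  have uniq : ∀ c : ℕ → F, c 0 = 1 ∧ QBesselODE hbar c → ∀ k : ℕ, c k = besselCoeff hbar k := by
    rintro c ⟨h0, hode⟩ k
    rw [qbessel_iff_rec hbar hhbar] at hode
    induction k with
    | zero => rw [h0, bessel0' hbar]
    | succ n ih => rw [hode n, ih, besselRec' hbar n]
  have hb : besselCoeff hbar 0 = 1 ∧ QBesselODE hbar (besselCoeff hbar) :=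
    ⟨bessel0' hbar, (qbessel_iff_rec hbar hhbar _).mpr (besselRec' hbar)⟩
  refine ⟨⟨besselCoeff hbar, hb, fun c hc => funext (uniq c hc)⟩, uniq, fun c => ?_⟩
  rw [qbessel_iff_rec hbar hhbar]
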